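/- (Realizability step in the proof of Lemma 5.6.) The explicit pair (G₂⁰, G₃⁰) is a Weierstrass pair of type (I4,4I2). Explicitly: G₂⁰ and G₃⁰ are homogeneous of degrees 4 and 6, one has the identity (G₂⁰)³ − (G₃⁰)² = −¼·X⁴·Y²·(X−Y)²·(Y−φX)²·(Y−ψX)², where φ = (1+√5)/2 and ψ = (1−√5)/2, the five linear forms X, Y, X−Y, Y−φX, Y−ψX are pairwise non-proportional, and none of these five linear forms divides G₂⁰ or G₃⁰. -/

import Mathlib

open MvPolynomial

noncomputable section

/-- A *Weierstrass pair of type (I4,4I2)*. -/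
def IsWeierstrassI4FourI2 (G₂ G₃ : MvPolynomial (Fin 2) ℂ) : Prop :=
  G₂.IsHomogeneous 4 ∧ G₃.IsHomogeneous 6 ∧
  ∃ (L : Fin 5 → MvPolynomial (Fin 2) ℂ) (u : ℂˣ),
    (∀ i, (L i).IsHomogeneous 1 ∧ L i ≠ 0) ∧
    (∀ i j, i ≠ j → ∀ t : ℂ, L i ≠ t • L j) ∧
    G₂ ^ 3 - G₃ ^ 2 =
      C (u : ℂ) * (L 0) ^ 4 * (L 1) ^ 2 * (L 2) ^ 2 * (L 3) ^ 2 * (L 4) ^ 2 ∧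
    (∀ i, ¬ L i ∣ G₂ ∧ ¬ L i ∣ G₃)

/-- The variable `X`. -/
def Xp : MvPolynomial (Fin 2) ℂ := X 0
/-- The variable `Y`. -/
def Yp : MvPolynomial (Fin 2) ℂ := X 1

/-- `H₁ = (1−η)⁻¹·(X² − ηXY + ηY²)`. -/
def H1 (η : ℂ) : MvPolynomial (Fin 2) ℂ :=
  C (1 - η)⁻¹ * (Xp ^ 2 - C η * Xp * Yp + C η * Yp ^ 2)

/-- `H₂ = (1−η)⁻¹·(ηX² − XY + Y²)`. -/
def H2 (η : ℂ) : MvPolynomial (Fin 2) ℂ :=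
  C (1 - η)⁻¹ * (C η * Xp ^ 2 - Xp * Yp + Yp ^ 2)

/-- `G₂⁰ = H₁·H₂`. -/
def G20 (η : ℂ) : MvPolynomial (Fin 2) ℂ := H1 η * H2 η

/-- `G₃⁰ = ½·(H₁³ + H₂³)`. -/
def G30 (η : ℂ) : MvPolynomial (Fin 2) ℂ := C (2⁻¹ : ℂ) * ((H1 η) ^ 3 + (H2 η) ^ 3)

/-- `φ = (1+√5)/2`. -/
def phi : ℂ := ((1 + Real.sqrt 5) / 2 : ℝ)
/-- `ψ = (1−√5)/2`. -/
def psi : ℂ := ((1 - Real.sqrt 5) / 2 : ℝ)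

/-- The five linear forms `X, Y, X−Y, Y−φX, Y−ψX`. -/
def Lforms : Fin 5 → MvPolynomial (Fin 2) ℂ :=
  ![Xp, Yp, Xp - Yp, Yp - C phi * Xp, Yp - C psi * Xp]

-- ### Scalar facts

lemma s5sq : ((Real.sqrt 5 : ℝ) : ℂ)^2 = 5 := by
  exact_mod_cast congrArg (Complex.ofReal) (Real.sq_sqrt (by norm_num : (5:ℝ) ≥ 0))

lemma phi_add_psi : phi + psi = 1 := by unfold phi psi; push_cast; ring
lemma phi_mul_psi : phi * psi = -1 := by
  unfold phi psi; push_cast; linear_combination (-1/4 : ℂ) * s5sq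
lemma phi_sq : phi^2 = phi + 1 := by
  unfold phi; push_cast; linear_combination (1/4 : ℂ) * s5sq
lemma psi_sq : psi^2 = psi + 1 := by
  unfold psi; push_cast; linear_combination (1/4 : ℂ) * s5sq
lemma phi_ne_psi : phi ≠ psi := by
  have h5 : Real.sqrt 5 ^ 2 = 5 := Real.sq_sqrt (by norm_num)
  have hs : Real.sqrt 5 ≠ 0 := by nlinarith
  unfold phi psi; intro h
  have := congrArg Complex.re h
  simp at this
  exact hs (by linarith)
lemma phi_ne_zero : phi ≠ 0 := by
  intro h; have := phi_mul_psi; rw [h, zero_mul] at this; norm_num at this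
lemma psi_ne_zero : psi ≠ 0 := by
  intro h; have := phi_mul_psi; rw [h, mul_zero] at this; norm_num at this
lemma phi_ne_one : phi ≠ 1 := by
  intro h
  have h1 := phi_add_psi
  rw [h] at h1
  exact psi_ne_zero (by linear_combination h1)
lemma psi_ne_one : psi ≠ 1 := by
  intro h
  have h1 := phi_add_psi
  rw [h] at h1
  exact phi_ne_zero (by linear_combination h1)

section withEta
variable {η : ℂ}

lemma eta_cube (hη : IsPrimitiveRoot η 3) : η^3 = 1 := hη.pow_eq_one
lemma eta_ne_one (hη : IsPrimitiveRoot η 3) : η ≠ 1 := hη.ne_one (by norm_num)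
lemma eta_sum (hη : IsPrimitiveRoot η 3) : η^2 + η + 1 = 0 := by
  have h3 := eta_cube hη
  have : (η - 1) * (η^2 + η + 1) = 0 := by linear_combination h3
  rcases mul_eq_zero.mp this with h | h
  · exact absurd (by linear_combination h) (eta_ne_one hη)
  · exact h
lemma one_sub_eta_ne (hη : IsPrimitiveRoot η 3) : (1:ℂ) - η ≠ 0 :=
  sub_ne_zero.mpr (Ne.symm (eta_ne_one hη))
lemma eta_ne_zero (hη : IsPrimitiveRoot η 3) : η ≠ 0 := by
  intro h; have := eta_cube hη; rw [h] at this; norm_num at this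
lemma one_add_eta_ne (hη : IsPrimitiveRoot η 3) : (1:ℂ) + η ≠ 0 := by
  intro h
  have h3 := eta_cube hη
  have : η = -1 := by linear_combination h
  rw [this] at h3; norm_num at h3
lemma inv_ne (hη : IsPrimitiveRoot η 3) : ((1:ℂ) - η)⁻¹ ≠ 0 :=
  inv_ne_zero (one_sub_eta_ne hη)

-- ### Polynomial identities

lemma hA (hη : IsPrimitiveRoot η 3) :
    C (1-η)⁻¹ * (1 - C η) = (1 : MvPolynomial (Fin 2) ℂ) := by
  rw [show (1 : MvPolynomial (Fin 2) ℂ) - C η = C (1 - η) by rw [map_sub, map_one],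
    ← map_mul, inv_mul_cancel₀ (one_sub_eta_ne hη), map_one]
lemma hCrel (hη : IsPrimitiveRoot η 3) :
    (C η)^2 + C η + 1 = (0 : MvPolynomial (Fin 2) ℂ) := by
  have h := congrArg (MvPolynomial.C (σ := Fin 2)) (eta_sum hη)
  simpa [C_add, C_pow] using h
lemma hD (hη : IsPrimitiveRoot η 3) : H1 η - H2 η = Xp^2 + Xp*Yp - Yp^2 := by
  unfold H1 H2
  linear_combination (Xp^2 + Xp*Yp - Yp^2) * hA hη
lemma hS (hη : IsPrimitiveRoot η 3) :
    (H1 η)^2 + H1 η * H2 η + (H2 η)^2 = Xp^2*Yp*(Xp-Yp) := by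
  unfold H1 H2
  linear_combination ((C (1-η)⁻¹*(1 - C η)+1) * (Xp^2*Yp*(Xp-Yp))) * hA hη
    + ((C (1-η)⁻¹)^2 * (Xp^4 - 2*Xp^3*Yp + 3*Xp^2*Yp^2 - 2*Xp*Yp^3 + Yp^4)) * hCrel hη
lemma hcube (hη : IsPrimitiveRoot η 3) :
    (H1 η)^3 - (H2 η)^3 = (Xp^2+Xp*Yp-Yp^2) * (Xp^2*Yp*(Xp-Yp)) := by
  linear_combination ((H1 η)^2 + H1 η*H2 η + (H2 η)^2) * hD hη + (Xp^2+Xp*Yp-Yp^2) * hS hη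
lemma hmain0 (η : ℂ) :
    G20 η ^ 3 - G30 η ^ 2 = C (-(1/4):ℂ) * ((H1 η)^3 - (H2 η)^3)^2 := by
  have hh2 : C (2⁻¹:ℂ) * 2 = (1 : MvPolynomial (Fin 2) ℂ) := by
    rw [show (2 : MvPolynomial (Fin 2) ℂ) = C 2 from (map_ofNat C 2).symm, ← map_mul]
    norm_num
  have hq : (C (-(1/4):ℂ) : MvPolynomial (Fin 2) ℂ) = -(C (2⁻¹:ℂ))^2 := by
    rw [← map_pow, ← map_neg]; norm_num
  rw [G20, G30, hq]
  linear_combination (-(2*C (2⁻¹:ℂ)+1) * (H1 η)^3 * (H2 η)^3) * hh2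

lemma hfs : (C phi + C psi : MvPolynomial (Fin 2) ℂ) = 1 := by
  rw [← map_add, phi_add_psi, map_one]
lemma hfp : (C phi * C psi : MvPolynomial (Fin 2) ℂ) = -1 := by
  rw [← map_mul, phi_mul_psi, map_neg, map_one]
lemma hP : (Yp - C phi * Xp) * (Yp - C psi * Xp) = -(Xp^2 + Xp*Yp - Yp^2) := by
  linear_combination (-(Xp*Yp)) * hfs + Xp^2 * hfp

lemma hmain (hη : IsPrimitiveRoot η 3) : G20 η ^ 3 - G30 η ^ 2 =
    C (-(1/4) : ℂ) * Xp ^ 4 * Yp ^ 2 * (Xp - Yp) ^ 2 *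
      (Yp - C phi * Xp) ^ 2 * (Yp - C psi * Xp) ^ 2 := by
  rw [hmain0 η, hcube hη]
  linear_combination (C (-(1/4):ℂ) * (Xp^2*Yp*(Xp-Yp))^2 *
    ((Xp^2+Xp*Yp-Yp^2) - (Yp - C phi * Xp) * (Yp - C psi * Xp))) * hP

-- ### Homogeneity

lemma hXh : Xp.IsHomogeneous 1 := isHomogeneous_X _ _
lemma hYh : Yp.IsHomogeneous 1 := isHomogeneous_X _ _
lemma hH1h : (H1 η).IsHomogeneous 2 := by
  have : (Xp ^ 2 - C η * Xp * Yp + C η * Yp ^ 2).IsHomogeneous 2 := by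
    have h1 : (Xp^2).IsHomogeneous 2 := by simpa using hXh.pow 2
    have h2 : (C η * Xp * Yp).IsHomogeneous 2 := by
      simpa using ((isHomogeneous_C _ η).mul hXh).mul hYh
    have h3 : (C η * Yp^2).IsHomogeneous 2 := by
      simpa using (isHomogeneous_C _ η).mul (hYh.pow 2)
    exact (h1.sub h2).add h3
  exact (isHomogeneous_C _ ((1-η)⁻¹)).mul this
lemma hH2h : (H2 η).IsHomogeneous 2 := by
  have : (C η * Xp ^ 2 - Xp * Yp + Yp ^ 2).IsHomogeneous 2 := by
    have h1 : (C η * Xp^2).IsHomogeneous 2 := by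
      simpa using (isHomogeneous_C _ η).mul (hXh.pow 2)
    have h2 : (Xp * Yp).IsHomogeneous 2 := hXh.mul hYh
    have h3 : (Yp^2).IsHomogeneous 2 := by simpa using hYh.pow 2
    exact (h1.sub h2).add h3
  exact (isHomogeneous_C _ ((1-η)⁻¹)).mul this
lemma hG20h : (G20 η).IsHomogeneous 4 := by
  exact hH1h.mul (hH2h (η := η))
lemma hG30h : (G30 η).IsHomogeneous 6 := by
  have h1 : ((H1 η)^3).IsHomogeneous 6 := by simpa using (hH1h (η := η)).pow 3
  have h2 : ((H2 η)^3).IsHomogeneous 6 := by simpa using (hH2h (η := η)).pow 3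
  exact (isHomogeneous_C _ ((2:ℂ)⁻¹)).mul (h1.add h2)
lemma hLh : ∀ i, (Lforms i).IsHomogeneous 1 ∧ Lforms i ≠ 0 := by
  have hev : ∀ (p : MvPolynomial (Fin 2) ℂ) (v : Fin 2 → ℂ), eval v p ≠ 0 → p ≠ 0 :=
    fun p v h h0 => h (by simp [h0])
  intro i
  fin_cases i <;> constructor
  · exact hXh
  · exact hev _ ![1,0] (by simp [Lforms, Xp])
  · exact hYh
  · exact hev _ ![0,1] (by simp [Lforms, Yp])
  · exact hXh.sub hYh
  · exact hev _ ![1,0] (by simp [Lforms, Xp, Yp])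
  · exact hYh.sub (by simpa using (isHomogeneous_C _ phi).mul hXh)
  · exact hev _ ![0,1] (by simp [Lforms, Xp, Yp])
  · exact hYh.sub (by simpa using (isHomogeneous_C _ psi).mul hXh)
  · exact hev _ ![0,1] (by simp [Lforms, Xp, Yp])

-- ### Non-proportionality

lemma hnonprop : ∀ i j, i ≠ j → ∀ t : ℂ, Lforms i ≠ t • Lforms j := by
  intro i j hij t h
  have e1 : eval ![(1:ℂ),0] (Lforms i) = t * eval ![(1:ℂ),0] (Lforms j) := by
    rw [h, smul_eq_C_mul, eval_mul, eval_C]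
  have e2 : eval ![(0:ℂ),1] (Lforms i) = t * eval ![(0:ℂ),1] (Lforms j) := by
    rw [h, smul_eq_C_mul, eval_mul, eval_C]
  have hdet : eval ![(1:ℂ),0] (Lforms i) * eval ![(0:ℂ),1] (Lforms j) =
      eval ![(0:ℂ),1] (Lforms i) * eval ![(1:ℂ),0] (Lforms j) := by
    rw [e1, e2]; ring
  clear e1 e2 h
  fin_cases i <;> fin_cases j <;>
    simp [Lforms, Xp, Yp] at hdet hij ⊢ <;>
    first
      | exact phi_ne_zero hdet
      | exact psi_ne_zero hdet
      | exact phi_ne_one hdet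
      | exact psi_ne_one hdet
      | exact phi_ne_zero hdet.symm
      | exact psi_ne_zero hdet.symm
      | exact phi_ne_one hdet.symm
      | exact psi_ne_one hdet.symm
      | exact phi_ne_psi hdet
      | exact phi_ne_psi hdet.symm

-- ### Non-divisibility

lemma not_dvd_of_eval (L G : MvPolynomial (Fin 2) ℂ) (v : Fin 2 → ℂ)
    (h0 : eval v L = 0) (hne : eval v G ≠ 0) : ¬ L ∣ G := by
  rintro ⟨q, rfl⟩
  exact hne (by rw [eval_mul, h0, zero_mul])

lemma evsimp (η : ℂ) (x y : ℂ) :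
    eval ![x,y] (H1 η) = (1-η)⁻¹ * (x^2 - η*x*y + η*y^2) ∧
    eval ![x,y] (H2 η) = (1-η)⁻¹ * (η*x^2 - x*y + y^2) := by
  constructor <;>
    simp only [H1, H2, Xp, Yp, eval_mul, eval_C, eval_add, eval_sub, eval_pow, eval_X,
      Matrix.cons_val_zero, Matrix.cons_val_one, Matrix.head_cons]

lemma evG20 (η : ℂ) (v : Fin 2 → ℂ) :
    eval v (G20 η) = eval v (H1 η) * eval v (H2 η) := by simp [G20]
lemma evG30 (η : ℂ) (v : Fin 2 → ℂ) :
    eval v (G30 η) = 2⁻¹ * ((eval v (H1 η))^3 + (eval v (H2 η))^3) := by simp [G30]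

lemma hnodvd (hη : IsPrimitiveRoot η 3) :
    ∀ i, ¬ Lforms i ∣ G20 η ∧ ¬ Lforms i ∣ G30 η := by
  have a0 := inv_ne hη
  have h3 := eta_cube hη
  have hη0 := eta_ne_zero hη
  have h1e := one_add_eta_ne hη
  set a := ((1:ℂ)-η)⁻¹ with ha
  have aη0 : a * η ≠ 0 := mul_ne_zero a0 hη0
  have N2a : a * η * a ≠ 0 := mul_ne_zero aη0 a0
  have N2b : a * (a * η) ≠ 0 := mul_ne_zero a0 aη0
  have N3a : (2⁻¹ : ℂ) * ((a*η)^3 + a^3) ≠ 0 := by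
    have h : (2⁻¹:ℂ) * ((a*η)^3 + a^3) = a^3 := by linear_combination ((2⁻¹:ℂ)*a^3) * h3
    rw [h]; exact pow_ne_zero _ a0
  have N3b : (2⁻¹ : ℂ) * (a^3 + (a*η)^3) ≠ 0 := by
    have h : (2⁻¹:ℂ) * (a^3 + (a*η)^3) = a^3 := by linear_combination ((2⁻¹:ℂ)*a^3) * h3
    rw [h]; exact pow_ne_zero _ a0
  have Nc : a * (1+η) ≠ 0 := mul_ne_zero a0 h1e
  have N2c : a * (1+η) * (a * (1+η)) ≠ 0 := mul_ne_zero Nc Nc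
  have N3c : (2⁻¹ : ℂ) * ((a*(1+η))^3 + (a*(1+η))^3) ≠ 0 := by
    have h : (2⁻¹:ℂ) * ((a*(1+η))^3 + (a*(1+η))^3) = (a*(1+η))^3 := by ring
    rw [h]; exact pow_ne_zero _ Nc
  have V10 : eval ![(0:ℂ),1] (H1 η) = a*η := by rw [(evsimp η 0 1).1]; ring
  have V20 : eval ![(0:ℂ),1] (H2 η) = a := by rw [(evsimp η 0 1).2]; ring
  have V11 : eval ![(1:ℂ),0] (H1 η) = a := by rw [(evsimp η 1 0).1]; ring
  have V21 : eval ![(1:ℂ),0] (H2 η) = a*η := by rw [(evsimp η 1 0).2]; ring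
  have V12 : eval ![(1:ℂ),1] (H1 η) = a := by rw [(evsimp η 1 1).1]; ring
  have V22 : eval ![(1:ℂ),1] (H2 η) = a*η := by rw [(evsimp η 1 1).2]; ring
  have V13 : eval ![(1:ℂ),phi] (H1 η) = a*(1+η) := by
    rw [(evsimp η 1 phi).1]; linear_combination (a*η) * phi_sq
  have V23 : eval ![(1:ℂ),phi] (H2 η) = a*(1+η) := by
    rw [(evsimp η 1 phi).2]; linear_combination a * phi_sq
  have V14 : eval ![(1:ℂ),psi] (H1 η) = a*(1+η) := by
    rw [(evsimp η 1 psi).1]; linear_combination (a*η) * psi_sq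
  have V24 : eval ![(1:ℂ),psi] (H2 η) = a*(1+η) := by
    rw [(evsimp η 1 psi).2]; linear_combination a * psi_sq
  intro i
  fin_cases i <;> constructor
  · exact not_dvd_of_eval _ _ ![0,1] (by simp [Lforms, Xp])
      (by rw [evG20, V10, V20]; exact N2a)
  · exact not_dvd_of_eval _ _ ![0,1] (by simp [Lforms, Xp])
      (by rw [evG30, V10, V20]; exact N3a)
  · exact not_dvd_of_eval _ _ ![1,0] (by simp [Lforms, Yp])
      (by rw [evG20, V11, V21]; exact N2b)
  · exact not_dvd_of_eval _ _ ![1,0] (by simp [Lforms, Yp])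
      (by rw [evG30, V11, V21]; exact N3b)
  · exact not_dvd_of_eval _ _ ![1,1] (by simp [Lforms, Xp, Yp])
      (by rw [evG20, V12, V22]; exact N2b)
  · exact not_dvd_of_eval _ _ ![1,1] (by simp [Lforms, Xp, Yp])
      (by rw [evG30, V12, V22]; exact N3b)
  · exact not_dvd_of_eval _ _ ![1,phi] (by simp [Lforms, Xp, Yp])
      (by rw [evG20, V13, V23]; exact N2c)
  · exact not_dvd_of_eval _ _ ![1,phi] (by simp [Lforms, Xp, Yp])
      (by rw [evG30, V13, V23]; exact N3c)
  · exact not_dvd_of_eval _ _ ![1,psi] (by simp [Lforms, Xp, Yp])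
      (by rw [evG20, V14, V24]; exact N2c)
  · exact not_dvd_of_eval _ _ ![1,psi] (by simp [Lforms, Xp, Yp])
      (by rw [evG30, V14, V24]; exact N3c)

end withEta

theorem normal_form_is_I4_fourI2 (η : ℂ) (hη : IsPrimitiveRoot η 3) :
    IsWeierstrassI4FourI2 (G20 η) (G30 η) ∧
    (G20 η).IsHomogeneous 4 ∧ (G30 η).IsHomogeneous 6 ∧
    (G20 η) ^ 3 - (G30 η) ^ 2 =
      C (-(1/4) : ℂ) * Xp ^ 4 * Yp ^ 2 * (Xp - Yp) ^ 2 *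
        (Yp - C phi * Xp) ^ 2 * (Yp - C psi * Xp) ^ 2 ∧
    (∀ i j, i ≠ j → ∀ t : ℂ, Lforms i ≠ t • Lforms j) ∧
    (∀ i, ¬ Lforms i ∣ G20 η ∧ ¬ Lforms i ∣ G30 η) := by
  refine ⟨⟨hG20h, hG30h, Lforms, Units.mk0 (-(1/4)) (by norm_num), hLh, hnonprop, ?_, hnodvd hη⟩,
    hG20h, hG30h, hmain hη, hnonprop, hnodvd hη⟩
  have := hmain hη
  simpa [Lforms] using this
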